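/- The parameter-dependent semiflow possesses η₁-slow relaxations if and only if there exist a point x* ∈ X, a point k* ∈ K, a sequence kₙ → k* in K, and a number ε > 0 such that for every n, every y ∈ ω(x*, k*) and every z ∈ ω(kₙ) satisfy dist(y, z) > ε. -/
import Mathlib


open Filter Topology Metric Set MeasureTheory
open scoped ENNReal

/-- A parameter-dependent semiflow on a metric space `X` with parameter space `K`:
a map `f : [0,∞) × X × K → X` (encoded with time in `ℝ`, with conditions only for
nonnegative times), continuous on `[0,∞) × X × K`, satisfying the semigroup
identities, and injective in `x` for each fixed time and parameter. -/
structure PSemiflow (X K : Type*) [MetricSpace X] [MetricSpace K] where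
  f : ℝ → X → K → X
  cont : ContinuousOn (fun p : ℝ × X × K => f p.1 p.2.1 p.2.2) {p : ℝ × X × K | 0 ≤ p.1}
  map_zero : ∀ x k, f 0 x k = x
  semigroup : ∀ t t' : ℝ, 0 ≤ t → 0 ≤ t' → ∀ x k, f t (f t' x k) k = f (t + t') x k
  inj : ∀ t : ℝ, 0 ≤ t → ∀ k, Function.Injective fun x => f t x k

namespace PSemiflow

variable {X K : Type*} [MetricSpace X] [MetricSpace K] (S : PSemiflow X K)

/-- The ω-limit set `ω(x,k)`: all limits of `f(tₙ,x,k)` along sequences `tₙ → ∞`. -/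
def omega (x : X) (k : K) : Set X :=
  {y | ∃ t : ℕ → ℝ, (∀ n, 0 ≤ t n) ∧ Tendsto t atTop atTop ∧
      Tendsto (fun n => S.f (t n) x k) atTop (𝓝 y)}

/-- The complete ω-limit set `ω(k) = ⋃ₓ ω(x,k)`. -/
def omegaK (k : K) : Set X := ⋃ x : X, S.omega x k

/-- The relaxation time `η₁(x,k,ε)`: time of the first entry of the motion into the
`ε`-neighbourhood of `ω(k)`. -/
noncomputable def eta1 (x : X) (k : K) (ε : ℝ) : ℝ :=
  sInf {t : ℝ | 0 ≤ t ∧ infDist (S.f t x k) (S.omegaK k) < ε}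

/-- The system possesses η₁-slow relaxations. -/
def SlowEta1 : Prop := ∃ ε > (0:ℝ), ∀ T > (0:ℝ), ∃ x k, S.eta1 x k ε > T

end PSemiflow

namespace PSemiflow

variable {X K : Type*} [MetricSpace X] [MetricSpace K] (S : PSemiflow X K)

lemma tendsto_f_seq {t : ℝ} (ht : 0 ≤ t) {p : ℕ → X} {q : ℕ → K} {x : X} {k : K}
    (hp : Tendsto p atTop (𝓝 x)) (hq : Tendsto q atTop (𝓝 k)) :
    Tendsto (fun n => S.f t (p n) (q n)) atTop (𝓝 (S.f t x k)) := by
  have h := S.cont (t, x, k) ht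
  have h2 : Tendsto (fun n => ((t, p n, q n) : ℝ × X × K)) atTop
      (𝓝[{p : ℝ × X × K | 0 ≤ p.1}] (t, x, k)) := by
    rw [tendsto_nhdsWithin_iff]
    refine ⟨?_, Eventually.of_forall fun n => ht⟩
    rw [nhds_prod_eq, nhds_prod_eq]
    exact tendsto_const_nhds.prodMk (hp.prodMk hq)
  exact h.tendsto.comp h2

lemma omega_nonempty [CompactSpace X] (x : X) (k : K) : (S.omega x k).Nonempty := by
  obtain ⟨y, -, φ, hφ, hy⟩ :=
    isCompact_univ.tendsto_subseq (x := fun n : ℕ => S.f n x k) (fun n => mem_univ _)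
  refine ⟨y, fun n => ((φ n : ℕ) : ℝ), fun n => Nat.cast_nonneg _, ?_, hy⟩
  exact tendsto_natCast_atTop_atTop.comp hφ.tendsto_atTop

lemma eventually_close [CompactSpace X] (x : X) (k : K) {δ : ℝ} (hδ : 0 < δ) :
    ∃ T : ℝ, 0 ≤ T ∧ ∀ t, T ≤ t → infDist (S.f t x k) (S.omega x k) < δ := by
  by_contra hcon
  push_neg at hcon
  have h1 : ∀ n : ℕ, ∃ t : ℝ, (n : ℝ) ≤ t ∧ δ ≤ infDist (S.f t x k) (S.omega x k) := by
    intro n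
    obtain ⟨t, ht1, ht2⟩ := hcon n (Nat.cast_nonneg n)
    exact ⟨t, ht1, ht2⟩
  choose ts hts1 hts2 using h1
  obtain ⟨y, -, φ, hφ, hy⟩ :=
    isCompact_univ.tendsto_subseq (x := fun n : ℕ => S.f (ts n) x k) (fun n => mem_univ _)
  have hmem : y ∈ S.omega x k := by
    refine ⟨fun n => ts (φ n), fun n => le_trans (Nat.cast_nonneg _) (hts1 _), ?_, hy⟩
    refine tendsto_atTop_mono (fun n => le_trans ?_ (hts1 (φ n))) tendsto_natCast_atTop_atTop
    exact_mod_cast hφ.le_apply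
  have hlim : Tendsto (fun n => infDist (S.f (ts (φ n)) x k) (S.omega x k)) atTop
      (𝓝 (infDist y (S.omega x k))) := ((continuous_infDist_pt (S.omega x k)).tendsto y).comp hy
  have h0 : infDist y (S.omega x k) = 0 := infDist_zero_of_mem hmem
  have := ge_of_tendsto' hlim (fun n => hts2 (φ n))
  rw [h0] at this
  linarith

lemma uniform_param [CompactSpace K] (x : X) {T δ : ℝ} (hT : 0 ≤ T) (hδ : 0 < δ)
    {ks : ℕ → K} {kstar : K} (hks : Tendsto ks atTop (𝓝 kstar)) :
    ∃ N, ∀ n ≥ N, ∀ t ∈ Icc (0:ℝ) T, dist (S.f t x (ks n)) (S.f t x kstar) < δ := by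
  set F : ℝ × K → X := fun p => S.f p.1 x p.2 with hF
  have hD : IsCompact (Icc (0:ℝ) T ×ˢ (univ : Set K)) := isCompact_Icc.prod isCompact_univ
  have hFc : ContinuousOn F (Icc (0:ℝ) T ×ˢ (univ : Set K)) := by
    have hmap : MapsTo (fun p : ℝ × K => ((p.1, x, p.2) : ℝ × X × K))
        (Icc (0:ℝ) T ×ˢ (univ : Set K)) {p : ℝ × X × K | 0 ≤ p.1} := fun p hp => hp.1.1
    exact S.cont.comp
      ((continuous_fst.prodMk (continuous_const.prodMk continuous_snd)).continuousOn) hmap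
  have hUC := hD.uniformContinuousOn_of_continuous hFc
  rw [Metric.uniformContinuousOn_iff] at hUC
  obtain ⟨η, hη, H⟩ := hUC δ hδ
  obtain ⟨N, hN⟩ := Metric.tendsto_atTop.1 hks η hη
  refine ⟨N, fun n hn t ht => ?_⟩
  have := H (t, ks n) ⟨ht, mem_univ _⟩ (t, kstar) ⟨ht, mem_univ _⟩ ?_
  · exact this
  · rw [Prod.dist_eq]
    simp only [dist_self]
    rw [sup_eq_right.2 dist_nonneg]
    exact hN n hn

end PSemiflow

/-- Theorem 2.2: the system possesses η₁-slow relaxations iff there are `x* ∈ X`,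
`k* ∈ K`, a sequence `kₙ → k*` and `ε > 0` such that for every `n`, every
`y ∈ ω(x*,k*)` and every `z ∈ ω(kₙ)` satisfy `dist y z > ε`. -/
theorem slowEta1_iff_omegaK_jump {X K : Type*} [MetricSpace X] [CompactSpace X]
    [MetricSpace K] [CompactSpace K] (S : PSemiflow X K) :
    S.SlowEta1 ↔
      ∃ (xstar : X) (kstar : K) (ks : ℕ → K) (ε : ℝ), 0 < ε ∧
        Tendsto ks atTop (𝓝 kstar) ∧
        ∀ n, ∀ y ∈ S.omega xstar kstar, ∀ z ∈ S.omegaK (ks n), dist y z > ε := by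
  constructor
  · rintro ⟨ε, hε, hslow⟩
    choose xx kk hxk using fun n : ℕ => hslow ((n:ℝ)+1) (by positivity)
    have far : ∀ n : ℕ, ∀ t : ℝ, 0 ≤ t → t ≤ (n:ℝ)+1 →
        ∀ z ∈ S.omegaK (kk n), ε ≤ dist (S.f t (xx n) (kk n)) z := by
      intro n t ht0 htn z hz
      have hnotin : ¬ infDist (S.f t (xx n) (kk n)) (S.omegaK (kk n)) < ε := by
        intro hlt
        have hbdd : BddBelow {t : ℝ | 0 ≤ t ∧ infDist (S.f t (xx n) (kk n)) (S.omegaK (kk n)) < ε} :=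
          ⟨0, fun s hs => hs.1⟩
        have hle := csInf_le hbdd (⟨ht0, hlt⟩ : t ∈ {t : ℝ | 0 ≤ t ∧
          infDist (S.f t (xx n) (kk n)) (S.omegaK (kk n)) < ε})
        have h2 := hxk n
        simp only [PSemiflow.eta1] at h2
        linarith
      exact le_trans (not_lt.1 hnotin) (infDist_le_dist_of_mem hz)
    set pp : ℕ → X := fun n => S.f (((n:ℝ)+1)/2) (xx n) (kk n) with hpp
    obtain ⟨⟨xstar, kstar⟩, -, φ, hφ, hconv⟩ :=
      isCompact_univ.tendsto_subseq (x := fun n => ((pp n, kk n) : X × K)) (fun n => mem_univ _)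
    have hp : Tendsto (fun n => pp (φ n)) atTop (𝓝 xstar) :=
      (continuous_fst.tendsto _).comp hconv
    have hk : Tendsto (fun n => kk (φ n)) atTop (𝓝 kstar) :=
      (continuous_snd.tendsto _).comp hconv
    by_cases hΩ : (S.omega xstar kstar).Nonempty
    · -- main case
      obtain ⟨C, hCsub, hCfin, hCcover⟩ :=
        finite_cover_balls_of_compact (isClosed_closure.isCompact :
          IsCompact (closure (S.omega xstar kstar))) (show (0:ℝ) < ε/8 by positivity)
      have hc : ∀ c : X, ∃ s : ℝ, 0 ≤ s ∧
          (c ∈ C → dist (S.f s xstar kstar) c < ε/4) := by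
        intro c
        by_cases hcC : c ∈ C
        · obtain ⟨y, hyΩ, hyc⟩ := Metric.mem_closure_iff.1 (hCsub hcC) (ε/8) (by positivity)
          obtain ⟨ts, hts0, -, htsf⟩ := hyΩ
          obtain ⟨j, hj⟩ := (Metric.tendsto_atTop.1 htsf (ε/8) (by positivity))
          refine ⟨ts j, hts0 j, fun _ => ?_⟩
          have := dist_triangle (S.f (ts j) xstar kstar) y c
          have hcy := dist_comm c y
          have := hj j le_rfl
          linarith
        · exact ⟨0, le_rfl, fun h => absurd h hcC⟩
      choose sc hsc0 hscd using hc
      have hMc : ∀ c : X, ∃ M : ℕ, ∀ m ≥ M,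
          dist (S.f (sc c) (pp (φ m)) (kk (φ m))) (S.f (sc c) xstar kstar) < ε/8 ∧
          sc c ≤ (((φ m : ℕ) : ℝ)+1)/2 := by
        intro c
        have h1 : Tendsto (fun m => S.f (sc c) (pp (φ m)) (kk (φ m))) atTop
            (𝓝 (S.f (sc c) xstar kstar)) := S.tendsto_f_seq (hsc0 c) hp hk
        obtain ⟨N1, hN1⟩ := Metric.tendsto_atTop.1 h1 (ε/8) (by positivity)
        have h3 : Tendsto (fun m : ℕ => (((φ m : ℕ) : ℝ)+1)/2) atTop atTop := by
          apply Tendsto.atTop_div_const (by norm_num)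
          exact tendsto_atTop_add_const_right _ _
            (tendsto_natCast_atTop_atTop.comp hφ.tendsto_atTop)
        obtain ⟨N2, hN2⟩ := (h3.eventually_ge_atTop (sc c)).exists_forall_of_atTop
        exact ⟨max N1 N2, fun m hm =>
          ⟨hN1 m (le_trans (le_max_left _ _) hm), hN2 m (le_trans (le_max_right _ _) hm)⟩⟩
      choose Mc hMc' using hMc
      obtain ⟨M, hM⟩ : ∃ M : ℕ, ∀ c ∈ C, Mc c ≤ M := by
        obtain ⟨M, hM⟩ := (hCfin.image Mc).bddAbove
        exact ⟨M, fun c hc => hM (mem_image_of_mem _ hc)⟩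
      refine ⟨xstar, kstar, fun j => kk (φ (M + j)), ε/2, half_pos hε, ?_, ?_⟩
      · exact hk.comp (tendsto_atTop_mono (fun j => Nat.le_add_left j M) tendsto_id)
      · intro j y hy z hz
        set m := M + j with hm
        obtain ⟨c, hcC, hyball⟩ := mem_iUnion₂.1 (hCcover (subset_closure hy))
        have hmge : Mc c ≤ m := le_trans (hM c hcC) (Nat.le_add_right M j)
        obtain ⟨hd8, hsle⟩ := hMc' c m hmge
        have hq_eq : S.f (sc c) (pp (φ m)) (kk (φ m)) =
            S.f (sc c + (((φ m : ℕ) : ℝ)+1)/2) (xx (φ m)) (kk (φ m)) :=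
          S.semigroup _ _ (hsc0 c) (by positivity) _ _
        have hfarq : ε ≤ dist (S.f (sc c) (pp (φ m)) (kk (φ m))) z := by
          rw [hq_eq]
          exact far (φ m) _ (by have := hsc0 c; positivity) (by linarith) z hz
        have hdyc : dist y c < ε/8 := mem_ball.1 hyball
        have hdc : dist (S.f (sc c) xstar kstar) c < ε/4 := hscd c hcC
        have t1 := dist_triangle y c (S.f (sc c) xstar kstar)
        have t2 := dist_triangle y (S.f (sc c) xstar kstar)
          (S.f (sc c) (pp (φ m)) (kk (φ m)))
        have t3 := dist_triangle (S.f (sc c) (pp (φ m)) (kk (φ m))) y z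
        have c1 := dist_comm c (S.f (sc c) xstar kstar)
        have c2 := dist_comm (S.f (sc c) xstar kstar) (S.f (sc c) (pp (φ m)) (kk (φ m)))
        have c3 := dist_comm y (S.f (sc c) (pp (φ m)) (kk (φ m)))
        linarith
    · exact ⟨xstar, kstar, fun n => kk (φ n), ε/2, half_pos hε, hk,
        fun n y hy z hz => absurd ⟨y, hy⟩ hΩ⟩
  · rintro ⟨xstar, kstar, ks, ε, hε, hks, hfar⟩
    refine ⟨ε/2, half_pos hε, fun T hT => ?_⟩
    obtain ⟨T₀, hT₀0, hT₀⟩ := S.eventually_close xstar kstar (show (0:ℝ) < ε/4 by positivity)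
    obtain ⟨N, hN⟩ := S.uniform_param xstar (show (0:ℝ) ≤ T₀ + T + 1 by linarith)
      (show (0:ℝ) < ε/4 by positivity) hks
    set k := ks N with hk
    set x := S.f T₀ xstar k with hx
    have hC : ∀ s : ℝ, 0 ≤ s → s ≤ T + 1 → ¬ infDist (S.f s x k) (S.omegaK k) < ε/2 := by
      intro s hs0 hs1 hlt
      have homegaKne : (S.omegaK k).Nonempty := by
        obtain ⟨w, hw⟩ := S.omega_nonempty x k
        exact ⟨w, mem_iUnion.2 ⟨x, hw⟩⟩
      obtain ⟨z, hz, hzd⟩ := (Metric.infDist_lt_iff homegaKne).1 hlt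
      have heq : S.f s x k = S.f (s + T₀) xstar k := S.semigroup s T₀ hs0 hT₀0 xstar k
      have h1 : infDist (S.f (s + T₀) xstar kstar) (S.omega xstar kstar) < ε/4 :=
        hT₀ _ (by linarith)
      obtain ⟨y, hy, hyd⟩ := (Metric.infDist_lt_iff (S.omega_nonempty xstar kstar)).1 h1
      have h2 : dist (S.f (s + T₀) xstar k) (S.f (s + T₀) xstar kstar) < ε/4 :=
        hN N le_rfl _ ⟨by linarith, by linarith⟩
      have h3 : dist y z > ε := hfar N y hy z hz
      rw [heq] at hzd
      have t1 := dist_triangle y (S.f (s + T₀) xstar kstar) z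
      have t2 := dist_triangle (S.f (s + T₀) xstar kstar) (S.f (s + T₀) xstar k) z
      have c1 := dist_comm y (S.f (s + T₀) xstar kstar)
      have c2 := dist_comm (S.f (s + T₀) xstar k) (S.f (s + T₀) xstar kstar)
      linarith
    obtain ⟨T₂, hT₂0, hT₂⟩ := S.eventually_close x k (half_pos hε)
    have hsub : S.omega x k ⊆ S.omegaK k := subset_iUnion (fun x => S.omega x k) x
    have hmem : T₂ ∈ {t : ℝ | 0 ≤ t ∧ infDist (S.f t x k) (S.omegaK k) < ε/2} :=
      ⟨hT₂0, lt_of_le_of_lt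
        (infDist_le_infDist_of_subset hsub (S.omega_nonempty x k)) (hT₂ T₂ le_rfl)⟩
    refine ⟨x, k, ?_⟩
    show sInf _ > T
    have hge : T + 1 ≤ sInf {t : ℝ | 0 ≤ t ∧ infDist (S.f t x k) (S.omegaK k) < ε/2} := by
      refine le_csInf ⟨T₂, hmem⟩ (fun s hs => ?_)
      by_contra hcon
      push_neg at hcon
      exact hC s hs.1 (le_of_lt hcon) hs.2
    linarith
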